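/- Under the additional hypotheses max_{1≤j≤N} (‖b_j‖∞ + ‖c_j‖∞) < 1 and max_{1≤j≤N} (‖d_j‖∞ + ‖e_j‖∞) < 1, the graph G(f_1) = {(t, f_1(t)) : t ∈ I} of the Edelstein hidden variable fractal interpolation function has upper box-counting dimension at most 2 − α, where α ∈ (0, 1] is the Hölder exponent of f_1 obtained from the smoothness theorem: limsup_{ε → 0⁺} (log N_ε)/(−log ε) ≤ 2 − α, with N_ε the number of ε-mesh squares of ℝ² intersecting G(f_1). -/

import Mathlib

/-- The number of `ε`-mesh squares `[mε,(m+1)ε] × [nε,(n+1)ε]` of `ℝ²` that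
intersect a set `G ⊆ ℝ²`. -/
noncomputable def meshCount (G : Set (ℝ × ℝ)) (ε : ℝ) : ℕ :=
  {mn : ℤ × ℤ | ((Set.Icc ((mn.1 : ℝ) * ε) (((mn.1 : ℝ) + 1) * ε) ×ˢ
      Set.Icc ((mn.2 : ℝ) * ε) (((mn.2 : ℝ) + 1) * ε)) ∩ G).Nonempty}.ncard

open Filter Set Real

lemma meshCount_le_of_holder (g : ℝ → ℝ) (T0 TN : ℝ) (hT : T0 < TN) (C α : ℝ)
    (hC : 0 < C) (hα : 0 < α) (hα1 : α ≤ 1)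
    (hH : ∀ x ∈ Set.Icc T0 TN, ∀ y ∈ Set.Icc T0 TN, |g x - g y| ≤ C * |x - y| ^ α)
    (ε : ℝ) (hε0 : 0 < ε) (hε1 : ε < 1) :
    (meshCount ((fun x => (x, g x)) '' Set.Icc T0 TN) ε : ℝ) ≤
      (TN - T0 + 2) * (C + 2) * ε ^ (α - 2) := by
  classical
  set G := (fun x => (x, g x)) '' Set.Icc T0 TN with hG
  set S := {mn : ℤ × ℤ | ((Set.Icc ((mn.1 : ℝ) * ε) (((mn.1 : ℝ) + 1) * ε) ×ˢ
      Set.Icc ((mn.2 : ℝ) * ε) (((mn.2 : ℝ) + 1) * ε)) ∩ G).Nonempty} with hS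
  have hinv1 : (1:ℝ) ≤ ε⁻¹ := by
    have h1 : ε * ε⁻¹ = 1 := mul_inv_cancel₀ hε0.ne'
    have h2 : (0:ℝ) < ε⁻¹ := inv_pos.2 hε0
    nlinarith
  -- extraction
  have hmem : ∀ m n : ℤ, (m, n) ∈ S → ∃ x, x ∈ Set.Icc T0 TN ∧
      (m : ℝ) * ε ≤ x ∧ x ≤ ((m : ℝ) + 1) * ε ∧
      (n : ℝ) * ε ≤ g x ∧ g x ≤ ((n : ℝ) + 1) * ε := by
    rintro m n ⟨pt, hsq, x, hxI, rfl⟩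
    exact ⟨x, hxI, hsq.1.1, hsq.1.2, hsq.2.1, hsq.2.2⟩
  have hspread : ∀ m n n' : ℤ, (m, n) ∈ S → (m, n') ∈ S →
      n' - n ≤ ⌊C * ε ^ (α - 1)⌋ + 1 := by
    intro m n n' h1 h2
    obtain ⟨x, hxI, hx1, hx2, hx3, hx4⟩ := hmem _ _ h1
    obtain ⟨x', hxI', hx1', hx2', hx3', hx4'⟩ := hmem _ _ h2
    have hxx : |x - x'| ≤ ε := by rw [abs_le]; constructor <;> nlinarith
    have hgg : |g x - g x'| ≤ C * ε ^ α := by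
      refine (hH x hxI x' hxI').trans ?_
      exact mul_le_mul_of_nonneg_left (Real.rpow_le_rpow (abs_nonneg _) hxx hα.le) hC.le
    have h5 : g x' - g x ≤ C * ε ^ α := by
      have := abs_le.1 hgg; linarith [this.1]
    have h6 : ((n' : ℝ) - n - 1) * ε ≤ C * ε ^ α := by nlinarith
    have h7 : ((n' - n - 1 : ℤ) : ℝ) ≤ C * ε ^ (α - 1) := by
      have heq : C * ε ^ (α - 1) * ε = C * ε ^ α := by
        rw [Real.rpow_sub hε0, Real.rpow_one]; field_simp
      push_cast
      nlinarith [h6, hε0]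
    have h8 : n' - n - 1 ≤ ⌊C * ε ^ (α - 1)⌋ := Int.le_floor.2 h7
    omega
  have hbdd : ∀ m n : ℤ, (m, n) ∈ S → ∀ n', (m, n') ∈ S →
      n - (⌊C * ε ^ (α - 1)⌋ + 1) ≤ n' := by
    intro m n h n' h'
    have := hspread m n' n h' h
    omega
  set n0 : ℤ → ℤ := fun m => sInf {k : ℤ | (m, k) ∈ S} with hn0
  have hn0mem : ∀ m n : ℤ, (m, n) ∈ S → (m, n0 m) ∈ S ∧ n0 m ≤ n := by
    intro m n h
    have hne : {k : ℤ | (m, k) ∈ S}.Nonempty := ⟨n, h⟩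
    have hbb : BddBelow {k : ℤ | (m, k) ∈ S} :=
      ⟨n - (⌊C * ε ^ (α - 1)⌋ + 1), fun k hk => hbdd m n h k hk⟩
    exact ⟨Int.csInf_mem hne hbb, csInf_le hbb h⟩
  set ψ : ℤ × ℤ → ℤ × ℤ := fun mn => (mn.1, mn.2 - n0 mn.1) with hψ
  have hinj : Set.InjOn ψ S := by
    rintro ⟨m, n⟩ h1 ⟨m', n'⟩ h2 heq
    simp only [hψ, Prod.mk.injEq] at heq
    obtain ⟨h3, h4⟩ := heq
    subst h3
    exact Prod.ext rfl (by dsimp only; linarith)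
  set mlo : ℤ := ⌈T0 / ε⌉ - 1 with hmlo
  set mhi : ℤ := ⌊TN / ε⌋ with hmhi
  set Q : ℤ := ⌊C * ε ^ (α - 1)⌋ + 1 with hQ
  have hQpos : 0 ≤ Q := by
    have h1 : (0:ℝ) ≤ C * ε ^ (α - 1) := by positivity
    have h2 : 0 ≤ ⌊C * ε ^ (α - 1)⌋ := Int.floor_nonneg.2 h1
    omega
  have hsub : ψ '' S ⊆ ↑(Finset.Icc mlo mhi ×ˢ Finset.Icc (0:ℤ) Q) := by
    rintro ⟨m, k⟩ ⟨⟨m', n⟩, hmn, heq⟩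
    simp only [hψ, Prod.mk.injEq] at heq
    obtain ⟨rfl, rfl⟩ := heq
    obtain ⟨x, hxI, hx1, hx2, _, _⟩ := hmem _ _ hmn
    simp only [Finset.coe_product, Finset.coe_Icc, Set.mem_prod, Set.mem_Icc]
    refine ⟨⟨?_, ?_⟩, ?_, ?_⟩
    · have hTx : T0 ≤ ((m' : ℝ) + 1) * ε := le_trans hxI.1 hx2
      have h1 : T0 / ε ≤ ((m' + 1 : ℤ) : ℝ) := by
        rw [div_le_iff₀ hε0]; push_cast; linarith
      have h2 : ⌈T0 / ε⌉ ≤ m' + 1 := Int.ceil_le.2 h1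
      omega
    · have h1 : (m' : ℝ) * ε ≤ TN := le_trans hx1 hxI.2
      have h2 : (m' : ℝ) ≤ TN / ε := (le_div_iff₀ hε0).2 h1
      exact Int.le_floor.2 h2
    · have := (hn0mem m' n hmn).2; omega
    · exact hspread m' (n0 m') n (hn0mem m' n hmn).1 hmn
  have hcard : meshCount G ε ≤ (mhi + 1 - mlo).toNat * (Q + 1).toNat := by
    calc meshCount G ε = (ψ '' S).ncard := (Set.ncard_image_of_injOn hinj).symm
      _ ≤ (↑(Finset.Icc mlo mhi ×ˢ Finset.Icc (0:ℤ) Q) : Set (ℤ × ℤ)).ncard :=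
          Set.ncard_le_ncard hsub (Finset.finite_toSet _)
      _ = (mhi + 1 - mlo).toNat * (Q + 1).toNat := by
          rw [Set.ncard_coe_finset, Finset.card_product, Int.card_Icc, Int.card_Icc]
          simp
  -- real estimates
  have hmR : ((mhi + 1 - mlo).toNat : ℝ) ≤ (TN - T0 + 2) * ε⁻¹ := by
    have h2 : (mhi : ℝ) ≤ TN / ε := Int.floor_le _
    have h3 : T0 / ε ≤ (⌈T0 / ε⌉ : ℝ) := Int.le_ceil _
    have h4 : (0:ℝ) ≤ (TN - T0 + 2) * ε⁻¹ :=
      le_of_lt (mul_pos (by linarith) (inv_pos.2 hε0))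
    have h5 : ((mhi + 1 - mlo : ℤ) : ℝ) ≤ (TN - T0 + 2) * ε⁻¹ := by
      have hd : TN / ε - T0 / ε = (TN - T0) * ε⁻¹ := by field_simp
      push_cast [hmlo]
      nlinarith [h2, h3, hinv1]
    rcases le_or_gt (mhi + 1 - mlo) 0 with h | h
    · have : (mhi + 1 - mlo).toNat = 0 := Int.toNat_of_nonpos h
      rw [this]; simpa using h4
    · have h6 : ((mhi + 1 - mlo).toNat : ℤ) = mhi + 1 - mlo := Int.toNat_of_nonneg h.le
      have h7 : ((mhi + 1 - mlo).toNat : ℝ) = ((mhi + 1 - mlo : ℤ) : ℝ) := by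
        exact_mod_cast h6
      rw [h7]; exact h5
  have hone_le : (1:ℝ) ≤ ε ^ (α - 1) := by
    have h1 : ε ^ (1 - α) ≤ 1 := Real.rpow_le_one hε0.le hε1.le (by linarith)
    have h2 : (0:ℝ) < ε ^ (1 - α) := Real.rpow_pos_of_pos hε0 _
    have h3 : ε ^ (α - 1) * ε ^ (1 - α) = 1 := by
      rw [← Real.rpow_add hε0]; norm_num
    nlinarith [Real.rpow_pos_of_pos hε0 (α - 1)]
  have hQR : ((Q + 1).toNat : ℝ) ≤ (C + 2) * ε ^ (α - 1) := by
    have h1 : ((Q + 1).toNat : ℤ) = Q + 1 := Int.toNat_of_nonneg (by omega)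
    have h3 : (⌊C * ε ^ (α - 1)⌋ : ℝ) ≤ C * ε ^ (α - 1) := Int.floor_le _
    have h4 : ((Q + 1 : ℤ) : ℝ) ≤ C * ε ^ (α - 1) + 2 := by
      rw [hQ]; push_cast; linarith
    have h5 : ((Q + 1).toNat : ℝ) = ((Q + 1 : ℤ) : ℝ) := by exact_mod_cast h1
    rw [h5]
    calc ((Q + 1 : ℤ) : ℝ) ≤ C * ε ^ (α - 1) + 2 := h4
      _ ≤ (C + 2) * ε ^ (α - 1) := by nlinarith
  calc (meshCount G ε : ℝ) ≤ (((mhi + 1 - mlo).toNat * (Q + 1).toNat : ℕ) : ℝ) := by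
        exact_mod_cast hcard
    _ = ((mhi + 1 - mlo).toNat : ℝ) * ((Q + 1).toNat : ℝ) := by push_cast; ring
    _ ≤ ((TN - T0 + 2) * ε⁻¹) * ((C + 2) * ε ^ (α - 1)) :=
        mul_le_mul hmR hQR (by positivity)
          (le_of_lt (mul_pos (by linarith) (inv_pos.2 hε0)))
    _ = (TN - T0 + 2) * (C + 2) * (ε⁻¹ * ε ^ (α - 1)) := by ring
    _ = (TN - T0 + 2) * (C + 2) * ε ^ (α - 2) := by
        congr 1
        rw [← Real.rpow_neg_one ε, ← Real.rpow_add hε0]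
        congr 1
        ring

lemma limsup_le_of_holder (g : ℝ → ℝ) (T0 TN : ℝ) (hT : T0 < TN) (C α : ℝ)
    (hC : 0 < C) (hα : 0 < α) (hα1 : α ≤ 1)
    (hH : ∀ x ∈ Set.Icc T0 TN, ∀ y ∈ Set.Icc T0 TN, |g x - g y| ≤ C * |x - y| ^ α) :
    Filter.limsup
      (fun ε : ℝ =>
        Real.log (meshCount ((fun x => (x, g x)) '' Set.Icc T0 TN) ε) / (-Real.log ε))
      (nhdsWithin 0 (Set.Ioi 0)) ≤ 2 - α := by
  set C₂ : ℝ := (TN - T0 + 2) * (C + 2) with hC₂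
  have hC₂1 : (1:ℝ) ≤ C₂ := by nlinarith
  set F : ℝ → ℝ := fun ε =>
    Real.log (meshCount ((fun x => (x, g x)) '' Set.Icc T0 TN) ε) / (-Real.log ε) with hF
  set φ : ℝ → ℝ := fun ε => 2 - α + Real.log C₂ * (-Real.log ε)⁻¹ with hφ
  have hIoo : Set.Ioo (0:ℝ) 1 ∈ nhdsWithin 0 (Set.Ioi 0) :=
    Ioo_mem_nhdsGT_of_mem (by norm_num)
  have hle : ∀ ε ∈ Set.Ioo (0:ℝ) 1, F ε ≤ φ ε := by
    intro ε hε
    obtain ⟨hε0, hε1⟩ := hε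
    have hlogε : Real.log ε < 0 := Real.log_neg hε0 hε1
    have hpos : (0:ℝ) < -Real.log ε := by linarith
    have hb := meshCount_le_of_holder g T0 TN hT C α hC hα hα1 hH ε hε0 hε1
    set mc : ℕ := meshCount ((fun x => (x, g x)) '' Set.Icc T0 TN) ε with hmc
    have hrhs : Real.log (C₂ * ε ^ (α - 2)) = Real.log C₂ + (α - 2) * Real.log ε := by
      rw [Real.log_mul (by positivity) (by positivity), Real.log_rpow hε0]
    have hlogb : Real.log mc ≤ Real.log C₂ + (α - 2) * Real.log ε := by
      rcases Nat.eq_zero_or_pos mc with h0 | h0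
      · rw [h0]
        simp only [Nat.cast_zero, Real.log_zero]
        have h1 : 0 ≤ Real.log C₂ := Real.log_nonneg hC₂1
        nlinarith
      · have h1 : (1:ℝ) ≤ (mc : ℝ) := by exact_mod_cast h0
        calc Real.log mc ≤ Real.log (C₂ * ε ^ (α - 2)) :=
              Real.log_le_log (by linarith) hb
          _ = _ := hrhs
    have key : F ε ≤ (Real.log C₂ + (α - 2) * Real.log ε) / (-Real.log ε) :=
      div_le_div_of_nonneg_right hlogb hpos.le
    refine key.trans_eq ?_
    rw [hφ]
    have hne : Real.log ε ≠ 0 := ne_of_lt hlogε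
    field_simp
    ring
  have hev : ∀ᶠ ε in nhdsWithin 0 (Set.Ioi 0), F ε ≤ φ ε :=
    Filter.eventually_of_mem hIoo hle
  have hnonneg : ∀ᶠ ε in nhdsWithin 0 (Set.Ioi 0), (0:ℝ) ≤ F ε := by
    refine Filter.eventually_of_mem hIoo (fun ε hε => ?_)
    have hlogε : Real.log ε < 0 := Real.log_neg hε.1 hε.2
    have h1 : 0 ≤ Real.log (meshCount ((fun x => (x, g x)) '' Set.Icc T0 TN) ε) :=
      Real.log_natCast_nonneg _
    exact div_nonneg h1 (by linarith)
  have htend : Filter.Tendsto φ (nhdsWithin 0 (Set.Ioi 0)) (nhds (2 - α)) := by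
    have h1 : Filter.Tendsto (fun ε : ℝ => -Real.log ε) (nhdsWithin 0 (Set.Ioi 0))
        Filter.atTop := Filter.tendsto_neg_atBot_atTop.comp Real.tendsto_log_nhdsGT_zero
    have h2 : Filter.Tendsto (fun ε : ℝ => (-Real.log ε)⁻¹) (nhdsWithin 0 (Set.Ioi 0))
        (nhds 0) := tendsto_inv_atTop_zero.comp h1
    have h3 : Filter.Tendsto φ (nhdsWithin 0 (Set.Ioi 0)) (nhds (2 - α + Real.log C₂ * 0)) :=
      Filter.Tendsto.const_add _ (Filter.Tendsto.const_mul _ h2)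
    simpa using h3
  calc Filter.limsup F (nhdsWithin 0 (Set.Ioi 0)) ≤
      Filter.limsup φ (nhdsWithin 0 (Set.Ioi 0)) := by
        refine Filter.limsup_le_limsup hev ?_ ?_
        · exact Filter.IsBoundedUnder.isCoboundedUnder_le ⟨0, Filter.eventually_map.2 hnonneg⟩
        · exact htend.isBoundedUnder_le
    _ = 2 - α := htend.limsup_eq



lemma holder_of_scales (Φ : ℝ → ℝ → ℝ) (T0 TN Δ am ρ M : ℝ)
    (hT : T0 < TN) (hΔ : 0 < Δ) (ham0 : 0 < am) (ham1 : am < 1)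
    (hρ0 : 0 < ρ) (hρ1 : ρ < 1) (hamρ : am ≤ ρ) (hM : 0 ≤ M)
    (hdiag : ∀ x, Φ x x ≤ 0)
    (hbound : ∀ x ∈ Set.Icc T0 TN, ∀ y ∈ Set.Icc T0 TN, Φ x y ≤ M)
    (hscale : ∀ n : ℕ, ∀ x ∈ Set.Icc T0 TN, ∀ y ∈ Set.Icc T0 TN,
      |x - y| ≤ am ^ n * Δ → Φ x y ≤ M * (1 + n) * ρ ^ n) :
    ∃ α : ℝ, 0 < α ∧ α ≤ 1 ∧ ∃ C : ℝ, 0 < C ∧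
      ∀ x ∈ Set.Icc T0 TN, ∀ y ∈ Set.Icc T0 TN, Φ x y ≤ C * |x - y| ^ α := by
  obtain ⟨σ, hσ⟩ : ∃ σ : ℝ, σ = (1 + ρ) / 2 := ⟨_, rfl⟩
  have hσ0 : 0 < σ := by rw [hσ]; linarith
  have hσ1 : σ < 1 := by rw [hσ]; linarith
  have hρσ : ρ < σ := by rw [hσ]; linarith
  have hamσ : am ≤ σ := le_of_lt (lt_of_le_of_lt hamρ hρσ)
  have hlogam : Real.log am < 0 := Real.log_neg ham0 ham1
  have hlogσ : Real.log σ < 0 := Real.log_neg hσ0 hσ1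
  obtain ⟨α, hα⟩ : ∃ α : ℝ, α = Real.log σ / Real.log am := ⟨_, rfl⟩
  have hα0 : 0 < α := hα ▸ div_pos_of_neg_of_neg hlogσ hlogam
  have hα1 : α ≤ 1 := by
    have h1 : Real.log am ≤ Real.log σ := Real.log_le_log ham0 hamσ
    have h2 : α * Real.log am = Real.log σ := by
      rw [hα, div_mul_cancel₀ _ (ne_of_lt hlogam)]
    nlinarith
  have hamα : am ^ α = σ := by
    rw [Real.rpow_def_of_pos ham0]
    have h1 : Real.log am * α = Real.log σ := by
      rw [hα, mul_div_cancel₀ _ (ne_of_lt hlogam)]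
    rw [h1, Real.exp_log hσ0]
  have hσn : ∀ n : ℕ, ((am ^ n : ℝ)) ^ α = σ ^ n := by
    intro n
    rw [← hamα, ← Real.rpow_natCast (am ^ α) n, ← Real.rpow_mul ham0.le,
      ← Real.rpow_natCast am n, ← Real.rpow_mul ham0.le, mul_comm]
  obtain ⟨hh, hh0, hσρ⟩ : ∃ hh : ℝ, 0 < hh ∧ (1 + hh) * ρ = σ := by
    refine ⟨σ / ρ - 1, ?_, ?_⟩
    · have : 1 < σ / ρ := (one_lt_div hρ0).2 hρσ
      linarith
    · field_simp
      ring
  obtain ⟨M', hM'eq⟩ : ∃ M' : ℝ, M' = M * (1 + 1 / hh) := ⟨_, rfl⟩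
  have hM'0 : 0 ≤ M' := by
    rw [hM'eq]
    have : (0:ℝ) ≤ 1 + 1 / hh := by positivity
    exact mul_nonneg hM this
  have habs : ∀ n : ℕ, M * (1 + n) * ρ ^ n ≤ M' * σ ^ n := by
    intro n
    have hb : (1 : ℝ) + n * hh ≤ (1 + hh) ^ n := one_add_mul_le_pow (by linarith) n
    have hρn : (0:ℝ) ≤ ρ ^ n := pow_nonneg hρ0.le n
    have h1 : (1 + (n:ℝ)) ≤ (1 + 1 / hh) * (1 + n * hh) := by
      have h2 : 0 < 1 / hh := by positivity
      have h3 : (1 + 1 / hh) * (1 + n * hh) = 1 + n * hh + 1 / hh + (1/hh) * ((n:ℝ) * hh) := by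
        ring
      have h4 : (1/hh) * ((n:ℝ) * hh) = (n:ℝ) := by field_simp
      rw [h3, h4]
      have h5 : (0:ℝ) ≤ (n:ℝ) * hh := by positivity
      linarith
    have key : (1 + (n:ℝ)) * ρ ^ n ≤ (1 + 1 / hh) * σ ^ n := by
      calc (1 + (n:ℝ)) * ρ ^ n ≤ ((1 + 1 / hh) * (1 + n * hh)) * ρ ^ n :=
            mul_le_mul_of_nonneg_right h1 hρn
        _ ≤ ((1 + 1 / hh) * (1 + hh) ^ n) * ρ ^ n := by
            have h5 : (0:ℝ) ≤ 1 + 1 / hh := by positivity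
            exact mul_le_mul_of_nonneg_right (mul_le_mul_of_nonneg_left hb h5) hρn
        _ = (1 + 1 / hh) * ((1 + hh) * ρ) ^ n := by rw [mul_pow]; ring
        _ = (1 + 1 / hh) * σ ^ n := by rw [hσρ]
    calc M * (1 + n) * ρ ^ n = M * ((1 + n) * ρ ^ n) := by ring
      _ ≤ M * ((1 + 1 / hh) * σ ^ n) := mul_le_mul_of_nonneg_left key hM
      _ = M' * σ ^ n := by rw [hM'eq]; ring
  obtain ⟨C, hCeq⟩ : ∃ C : ℝ, C = M' * (Δ * am) ^ (-α) + M * Δ ^ (-α) + 1 := ⟨_, rfl⟩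
  have hterm1 : (0:ℝ) ≤ M' * (Δ * am) ^ (-α) :=
    mul_nonneg hM'0 (Real.rpow_nonneg (by positivity) _)
  have hterm2 : (0:ℝ) ≤ M * Δ ^ (-α) := mul_nonneg hM (Real.rpow_nonneg hΔ.le _)
  have hC0 : 0 < C := by rw [hCeq]; linarith
  refine ⟨α, hα0, hα1, C, hC0, ?_⟩
  intro x hx y hy
  rcases eq_or_ne x y with rfl | hxy
  · have h1 : |x - x| = 0 := by simp
    rw [h1, Real.zero_rpow (ne_of_gt hα0), mul_zero]
    exact hdiag x
  have hδ0 : 0 < |x - y| := abs_pos.2 (sub_ne_zero.2 hxy)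
  have hδα : 0 < |x - y| ^ α := Real.rpow_pos_of_pos hδ0 _
  rcases le_or_gt |x - y| Δ with hcase | hcase
  · have hex : ∃ k : ℕ, am ^ (k + 1) * Δ < |x - y| := by
      obtain ⟨k, hk⟩ := exists_pow_lt_of_lt_one (div_pos hδ0 hΔ) ham1
      refine ⟨k, ?_⟩
      have h1 : am ^ k * Δ < |x - y| := by
        rw [lt_div_iff₀ hΔ] at hk
        linarith
      have h2 : am ^ (k + 1) ≤ am ^ k := pow_le_pow_of_le_one ham0.le ham1.le (by omega)
      nlinarith
    obtain ⟨n, hlt, hmin⟩ : ∃ n : ℕ, am ^ (n + 1) * Δ < |x - y| ∧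
        ∀ k, k < n → ¬(am ^ (k + 1) * Δ < |x - y|) :=
      ⟨Nat.find hex, Nat.find_spec hex, fun k hk => Nat.find_min hex hk⟩
    have hge : |x - y| ≤ am ^ n * Δ := by
      rcases Nat.eq_zero_or_pos n with h0 | h0
      · rw [h0]; simpa using hcase
      · have h1 := hmin (n - 1) (by omega)
        push_neg at h1
        have he : n - 1 + 1 = n := by omega
        rwa [he] at h1
    have hΦ : Φ x y ≤ M' * σ ^ n :=
      (hscale n x hx y hy hge).trans (habs n)
    have hσle : σ ^ n ≤ (|x - y| / (Δ * am)) ^ α := by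
      rw [← hσn n]
      apply Real.rpow_le_rpow (pow_nonneg ham0.le n) _ hα0.le
      rw [le_div_iff₀ (by positivity)]
      have hps : am ^ n * (Δ * am) = am ^ (n + 1) * Δ := by rw [pow_succ]; ring
      rw [hps]; exact hlt.le
    have hδdiv : (|x - y| / (Δ * am)) ^ α = |x - y| ^ α * (Δ * am) ^ (-α) := by
      rw [Real.div_rpow hδ0.le (by positivity), Real.rpow_neg (by positivity), div_eq_mul_inv]
    calc Φ x y ≤ M' * σ ^ n := hΦ
      _ ≤ M' * (|x - y| ^ α * (Δ * am) ^ (-α)) := by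
          rw [← hδdiv]
          exact mul_le_mul_of_nonneg_left hσle hM'0
      _ = (M' * (Δ * am) ^ (-α)) * |x - y| ^ α := by ring
      _ ≤ C * |x - y| ^ α := by
          apply mul_le_mul_of_nonneg_right _ hδα.le
          rw [hCeq]; linarith
  · have h1 : (1:ℝ) ≤ (|x - y| / Δ) ^ α := by
      apply Real.one_le_rpow _ hα0.le
      rw [le_div_iff₀ hΔ]; linarith
    have h2 : (|x - y| / Δ) ^ α = |x - y| ^ α * Δ ^ (-α) := by
      rw [Real.div_rpow hδ0.le hΔ.le, Real.rpow_neg hΔ.le, div_eq_mul_inv]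
    calc Φ x y ≤ M := hbound x hx y hy
      _ ≤ M * ((|x - y| / Δ) ^ α) := le_mul_of_one_le_right hM h1
      _ = (M * Δ ^ (-α)) * |x - y| ^ α := by rw [h2]; ring
      _ ≤ C * |x - y| ^ α := by
          apply mul_le_mul_of_nonneg_right _ hδα.le
          rw [hCeq]; linarith

lemma exists_uniform_bound (P : ℕ → ℝ → Prop)
    (hmono : ∀ j (K K' : ℝ), K ≤ K' → P j K → P j K') :
    ∀ s : Finset ℕ, (∀ j ∈ s, ∃ K, P j K) → ∃ K : ℝ, ∀ j ∈ s, P j K := by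
  classical
  intro s
  induction s using Finset.induction_on with
  | empty => exact fun _ => ⟨0, by simp⟩
  | @insert a s ha ih =>
    intro h
    obtain ⟨K1, hK1⟩ := h a (Finset.mem_insert_self a s)
    obtain ⟨K2, hK2⟩ := ih (fun j hj => h j (Finset.mem_insert_of_mem hj))
    refine ⟨max K1 K2, fun j hj => ?_⟩
    rcases Finset.mem_insert.1 hj with rfl | hj'
    · exact hmono j K1 _ (le_max_left _ _) hK1
    · exact hmono j K2 _ (le_max_right _ _) (hK2 j hj')

set_option maxHeartbeats 2000000 in
/-- Under `max_j (‖b j‖∞ + ‖c j‖∞) < 1` and `max_j (‖d j‖∞ + ‖e j‖∞) < 1`, the graph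
of the EHVFIF `f₁` has upper box-counting dimension at most `2 - α`, where
`α ∈ (0,1]` is the Hölder exponent of `f₁` obtained from the smoothness theorem. -/
theorem EHVFIF_box_dimension
    (N : ℕ) (hN : 0 < N)
    (t v w : ℕ → ℝ)
    (htmono : ∀ j, j < N → t j < t (j + 1))
    (a fc : ℕ → ℝ) (L : ℕ → ℝ → ℝ)
    (hL : ∀ j, 1 ≤ j → j ≤ N → ∀ x : ℝ, L j x = a j * x + fc j)
    (ha : ∀ j, 1 ≤ j → j ≤ N → a j ≠ 0 ∧ |a j| < 1)
    (hL0 : ∀ j, 1 ≤ j → j ≤ N → L j (t 0) = t (j - 1))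
    (hLN : ∀ j, 1 ≤ j → j ≤ N → L j (t N) = t j)
    (b c d e p q : ℕ → ℝ → ℝ)
    (hLip : ∀ j, 1 ≤ j → j ≤ N → ∀ g ∈ ([b j, c j, d j, e j, p j, q j] : List (ℝ → ℝ)),
      ∃ Kg : NNReal, LipschitzOnWith Kg g (Set.Icc (t 0) (t N)))
    (hbd : ∀ j, 1 ≤ j → j ≤ N → ∃ B D : ℝ, B + D ≤ 1 ∧
      (∀ x ∈ Set.Icc (t 0) (t N), |b j x| ≤ B) ∧ (∀ x ∈ Set.Icc (t 0) (t N), |d j x| ≤ D))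
    (hce : ∀ j, 1 ≤ j → j ≤ N → ∃ C E : ℝ, C + E ≤ 1 ∧
      (∀ x ∈ Set.Icc (t 0) (t N), |c j x| ≤ C) ∧ (∀ x ∈ Set.Icc (t 0) (t N), |e j x| ≤ E))
    (s r : ℕ → ℝ → ℝ)
    (hs : ∀ j, 1 ≤ j → j ≤ N → ∀ x y : ℝ, x ≠ y → |s j x - s j y| < |x - y|)
    (hr : ∀ j, 1 ≤ j → j ≤ N → ∀ x y : ℝ, x ≠ y → |r j x - r j y| < |x - y|)
    (F : ℕ → ℝ → ℝ × ℝ → ℝ × ℝ)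
    (hF : ∀ j x vw, F j x vw = (b j x * s j vw.1 + c j x * r j vw.2 + p j x,
                                d j x * s j vw.1 + e j x * r j vw.2 + q j x))
    (hF0 : ∀ j, 1 ≤ j → j ≤ N → F j (t 0) (v 0, w 0) = (v (j - 1), w (j - 1)))
    (hFN : ∀ j, 1 ≤ j → j ≤ N → F j (t N) (v N, w N) = (v j, w j))
    (hbc : ∃ γ : ℝ, γ < 1 ∧ ∀ j, 1 ≤ j → j ≤ N → ∀ x ∈ Set.Icc (t 0) (t N),
      |b j x| + |c j x| ≤ γ)
    (hde : ∃ γ : ℝ, γ < 1 ∧ ∀ j, 1 ≤ j → j ≤ N → ∀ x ∈ Set.Icc (t 0) (t N),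
      |d j x| + |e j x| ≤ γ)
    (f : ℝ → ℝ × ℝ) (hfc : ContinuousOn f (Set.Icc (t 0) (t N)))
    (hfe : ∀ j, 1 ≤ j → j ≤ N → ∀ x ∈ Set.Icc (t 0) (t N), f (L j x) = F j x (f x))
    (hfi : ∀ j, j ≤ N → f (t j) = (v j, w j))
    :
    ∃ α : ℝ, 0 < α ∧ α ≤ 1 ∧
      (∃ C : ℝ, 0 < C ∧ ∀ x ∈ Set.Icc (t 0) (t N), ∀ y ∈ Set.Icc (t 0) (t N),
        |(f x).1 - (f y).1| ≤ C * |x - y| ^ α) ∧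
      Filter.limsup
        (fun ε : ℝ =>
          Real.log (meshCount ((fun x => (x, (f x).1)) '' Set.Icc (t 0) (t N)) ε) /
            (-Real.log ε))
        (nhdsWithin 0 (Set.Ioi 0)) ≤ 2 - α := by
  classical
  -- monotonicity of knots
  have tmon : ∀ j : ℕ, j ≤ N → ∀ i : ℕ, i ≤ j → t i ≤ t j := by
    intro j
    induction j with
    | zero =>
      intro _ i hi
      have h : i = 0 := by omega
      exact h ▸ le_rfl
    | succ k ih =>
      intro hkN i hi
      rcases Nat.lt_or_ge i (k + 1) with hlt | hge
      · have h1 : t i ≤ t k := ih (by omega) i (by omega)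
        have h2 : t k < t (k + 1) := htmono k (by omega)
        linarith
      · have h : i = k + 1 := by omega
        exact h ▸ le_rfl
  have hTT : t 0 < t N := by
    have h1 : t 0 < t 1 := htmono 0 hN
    have h2 : t 1 ≤ t N := tmon N le_rfl 1 hN
    linarith
  have htmem : ∀ j : ℕ, j ≤ N → t j ∈ Set.Icc (t 0) (t N) :=
    fun j hj => ⟨tmon j hj 0 (Nat.zero_le _), tmon N le_rfl j hj⟩
  -- positivity of a
  have hgap : ∀ j, 1 ≤ j → j ≤ N → t (j - 1) < t j := by
    intro j h1 h2
    have h3 := htmono (j - 1) (by omega)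
    have h4 : j - 1 + 1 = j := by omega
    rwa [h4] at h3
  have haeq : ∀ j, 1 ≤ j → j ≤ N → a j * (t N - t 0) = t j - t (j - 1) := by
    intro j h1 h2
    have e1 : a j * t N + fc j = t j := by rw [← hL j h1 h2]; exact hLN j h1 h2
    have e2 : a j * t 0 + fc j = t (j - 1) := by rw [← hL j h1 h2]; exact hL0 j h1 h2
    nlinarith [e1, e2]
  have hapos : ∀ j, 1 ≤ j → j ≤ N → 0 < a j := by
    intro j h1 h2
    have h3 := haeq j h1 h2
    have h4 := hgap j h1 h2
    nlinarith
  have haone : ∀ j, 1 ≤ j → j ≤ N → a j < 1 := by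
    intro j h1 h2
    have h3 := (ha j h1 h2).2
    have h4 := le_abs_self (a j)
    linarith
  -- am and Δ via finite minima
  have hIccne : (Finset.Icc 1 N).Nonempty := ⟨1, Finset.mem_Icc.2 ⟨le_rfl, hN⟩⟩
  obtain ⟨j₀, hj₀mem, hj₀min⟩ := Finset.exists_min_image (Finset.Icc 1 N) a hIccne
  obtain ⟨hj₀1, hj₀N⟩ := Finset.mem_Icc.1 hj₀mem
  obtain ⟨am, ham⟩ : ∃ am : ℝ, am = a j₀ := ⟨_, rfl⟩
  have ham0 : 0 < am := ham ▸ hapos j₀ hj₀1 hj₀N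
  have ham1 : am < 1 := ham ▸ haone j₀ hj₀1 hj₀N
  have hammin : ∀ j, 1 ≤ j → j ≤ N → am ≤ a j := by
    intro j h1 h2
    rw [ham]
    exact hj₀min j (Finset.mem_Icc.2 ⟨h1, h2⟩)
  obtain ⟨j₁, hj₁mem, hj₁min⟩ :=
    Finset.exists_min_image (Finset.Icc 1 N) (fun j => t j - t (j - 1)) hIccne
  obtain ⟨hj₁1, hj₁N⟩ := Finset.mem_Icc.1 hj₁mem
  obtain ⟨Δ, hΔeq⟩ : ∃ Δ : ℝ, Δ = t j₁ - t (j₁ - 1) := ⟨_, rfl⟩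
  have hΔ0 : 0 < Δ := by rw [hΔeq]; linarith [hgap j₁ hj₁1 hj₁N]
  have hΔmin : ∀ j, 1 ≤ j → j ≤ N → Δ ≤ t j - t (j - 1) := by
    intro j h1 h2
    rw [hΔeq]
    exact hj₁min j (Finset.mem_Icc.2 ⟨h1, h2⟩)
  -- γ
  obtain ⟨γ₁, hγ₁lt, hγ₁⟩ := hbc
  obtain ⟨γ₂, hγ₂lt, hγ₂⟩ := hde
  obtain ⟨γ, hγeq⟩ : ∃ γ : ℝ, γ = max γ₁ γ₂ := ⟨_, rfl⟩
  have hγlt : γ < 1 := by rw [hγeq]; exact max_lt hγ₁lt hγ₂lt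
  have hγbc : ∀ j, 1 ≤ j → j ≤ N → ∀ x ∈ Set.Icc (t 0) (t N), |b j x| + |c j x| ≤ γ := by
    intro j h1 h2 x hx
    exact (hγ₁ j h1 h2 x hx).trans (hγeq ▸ le_max_left _ _)
  have hγde : ∀ j, 1 ≤ j → j ≤ N → ∀ x ∈ Set.Icc (t 0) (t N), |d j x| + |e j x| ≤ γ := by
    intro j h1 h2 x hx
    exact (hγ₂ j h1 h2 x hx).trans (hγeq ▸ le_max_right _ _)
  have hγ0 : 0 ≤ γ := by
    have h1 := hγbc 1 le_rfl hN (t 0) (htmem 0 (Nat.zero_le _))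
    have h2 := abs_nonneg (b 1 (t 0))
    have h3 := abs_nonneg (c 1 (t 0))
    linarith
  -- ρ
  obtain ⟨ρ, hρeq⟩ : ∃ ρ : ℝ, ρ = max γ am := ⟨_, rfl⟩
  have hρ0 : 0 < ρ := by rw [hρeq]; exact lt_max_of_lt_right ham0
  have hρ1 : ρ < 1 := by rw [hρeq]; exact max_lt hγlt ham1
  have hamρ : am ≤ ρ := hρeq ▸ le_max_right _ _
  have hγρ : γ ≤ ρ := hρeq ▸ le_max_left _ _
  -- bound on f
  obtain ⟨Mf0, hMf0⟩ := isCompact_Icc.exists_bound_of_continuousOn hfc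
  obtain ⟨Mf, hMfeq⟩ : ∃ Mf : ℝ, Mf = max Mf0 0 := ⟨_, rfl⟩
  have hMf0' : 0 ≤ Mf := hMfeq ▸ le_max_right _ _
  have hMf1 : ∀ x ∈ Set.Icc (t 0) (t N), |(f x).1| ≤ Mf := by
    intro x hx
    have h1 : ‖(f x).1‖ ≤ ‖f x‖ := norm_fst_le _
    have h2 := hMf0 x hx
    rw [Real.norm_eq_abs] at h1
    rw [hMfeq]
    exact le_max_of_le_left (h1.trans h2)
  have hMf2 : ∀ x ∈ Set.Icc (t 0) (t N), |(f x).2| ≤ Mf := by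
    intro x hx
    have h1 : ‖(f x).2‖ ≤ ‖f x‖ := norm_snd_le _
    have h2 := hMf0 x hx
    rw [Real.norm_eq_abs] at h1
    rw [hMfeq]
    exact le_max_of_le_left (h1.trans h2)
  -- Edelstein maps are 1-Lipschitz
  have hs1 : ∀ j, 1 ≤ j → j ≤ N → ∀ x y : ℝ, |s j x - s j y| ≤ |x - y| := by
    intro j h1 h2 x y
    rcases eq_or_ne x y with rfl | hne
    · simp
    · exact (hs j h1 h2 x y hne).le
  have hr1 : ∀ j, 1 ≤ j → j ≤ N → ∀ x y : ℝ, |r j x - r j y| ≤ |x - y| := by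
    intro j h1 h2 x y
    rcases eq_or_ne x y with rfl | hne
    · simp
    · exact (hr j h1 h2 x y hne).le
  -- uniform bound on |s j 0|, |r j 0|
  obtain ⟨Ms, hMs⟩ := exists_uniform_bound (fun j K => |s j 0| ≤ K ∧ |r j 0| ≤ K)
    (fun j K K' hKK h => ⟨h.1.trans hKK, h.2.trans hKK⟩) (Finset.Icc 1 N)
    (fun j _ => ⟨max |s j 0| |r j 0|, le_max_left _ _, le_max_right _ _⟩)
  have hMs0 : 0 ≤ Ms := le_trans (abs_nonneg _) (hMs 1 (Finset.mem_Icc.2 ⟨le_rfl, hN⟩)).1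
  obtain ⟨Mv, hMveq⟩ : ∃ Mv : ℝ, Mv = Mf + Ms := ⟨_, rfl⟩
  have hMv0 : 0 ≤ Mv := by rw [hMveq]; linarith
  have hsv : ∀ j, 1 ≤ j → j ≤ N → ∀ x ∈ Set.Icc (t 0) (t N), |s j ((f x).1)| ≤ Mv := by
    intro j h1 h2 x hx
    have h3 : |s j ((f x).1) - s j 0| ≤ |(f x).1 - 0| := hs1 j h1 h2 _ _
    have h4 := (hMs j (Finset.mem_Icc.2 ⟨h1, h2⟩)).1
    have h5 := hMf1 x hx
    have h6 : |s j ((f x).1)| ≤ |s j ((f x).1) - s j 0| + |s j 0| := by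
      have := abs_add_le (s j ((f x).1) - s j 0) (s j 0)
      simpa using this
    rw [sub_zero] at h3
    rw [hMveq]
    linarith
  have hrv : ∀ j, 1 ≤ j → j ≤ N → ∀ x ∈ Set.Icc (t 0) (t N), |r j ((f x).2)| ≤ Mv := by
    intro j h1 h2 x hx
    have h3 : |r j ((f x).2) - r j 0| ≤ |(f x).2 - 0| := hr1 j h1 h2 _ _
    have h4 := (hMs j (Finset.mem_Icc.2 ⟨h1, h2⟩)).2
    have h5 := hMf2 x hx
    have h6 : |r j ((f x).2)| ≤ |r j ((f x).2) - r j 0| + |r j 0| := by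
      have := abs_add_le (r j ((f x).2) - r j 0) (r j 0)
      simpa using this
    rw [sub_zero] at h3
    rw [hMveq]
    linarith
  -- uniform Lipschitz constant
  obtain ⟨K6, hK6⟩ := exists_uniform_bound
    (fun j K => 0 ≤ K ∧ ∀ g ∈ ([b j, c j, d j, e j, p j, q j] : List (ℝ → ℝ)),
      ∀ x ∈ Set.Icc (t 0) (t N), ∀ y ∈ Set.Icc (t 0) (t N), |g x - g y| ≤ K * |x - y|)
    (by
      intro j K K' hKK h
      refine ⟨h.1.trans hKK, fun g hg x hx y hy => (h.2 g hg x hx y hy).trans ?_⟩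
      exact mul_le_mul_of_nonneg_right hKK (abs_nonneg _))
    (Finset.Icc 1 N)
    (by
      intro j hj
      obtain ⟨hj1, hjN⟩ := Finset.mem_Icc.1 hj
      have key : ∀ g ∈ ([b j, c j, d j, e j, p j, q j] : List (ℝ → ℝ)),
          ∃ K : ℝ, 0 ≤ K ∧ ∀ x ∈ Set.Icc (t 0) (t N), ∀ y ∈ Set.Icc (t 0) (t N),
            |g x - g y| ≤ K * |x - y| := by
        intro g hg
        obtain ⟨Kg, hKg⟩ := hLip j hj1 hjN g hg
        refine ⟨Kg, Kg.coe_nonneg, fun x hx y hy => ?_⟩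
        have := hKg.dist_le_mul x hx y hy
        rwa [Real.dist_eq, Real.dist_eq] at this
      obtain ⟨Kb, hKb0, hKb⟩ := key (b j) (by simp)
      obtain ⟨Kc, hKc0, hKc⟩ := key (c j) (by simp)
      obtain ⟨Kd, hKd0, hKd⟩ := key (d j) (by simp)
      obtain ⟨Ke, hKe0, hKe⟩ := key (e j) (by simp)
      obtain ⟨Kp, hKp0, hKp⟩ := key (p j) (by simp)
      obtain ⟨Kq, hKq0, hKq⟩ := key (q j) (by simp)
      refine ⟨max (max (max Kb Kc) (max Kd Ke)) (max Kp Kq), by positivity, ?_⟩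
      intro g hg x hx y hy
      have hd : ∀ Kg : ℝ, Kg ≤ max (max (max Kb Kc) (max Kd Ke)) (max Kp Kq) →
          |g x - g y| ≤ Kg * |x - y| →
          |g x - g y| ≤ max (max (max Kb Kc) (max Kd Ke)) (max Kp Kq) * |x - y| :=
        fun Kg hle hb => hb.trans (mul_le_mul_of_nonneg_right hle (abs_nonneg _))
      simp only [List.mem_cons, List.not_mem_nil, or_false] at hg
      rcases hg with rfl | rfl | rfl | rfl | rfl | rfl
      · exact hd Kb (by simp [le_max_iff]) (hKb x hx y hy)
      · exact hd Kc (by simp [le_max_iff]) (hKc x hx y hy)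
      · exact hd Kd (by simp [le_max_iff]) (hKd x hx y hy)
      · exact hd Ke (by simp [le_max_iff]) (hKe x hx y hy)
      · exact hd Kp (by simp [le_max_iff]) (hKp x hx y hy)
      · exact hd Kq (by simp [le_max_iff]) (hKq x hx y hy))
  have hK60 : 0 ≤ K6 := (hK6 1 (Finset.mem_Icc.2 ⟨le_rfl, hN⟩)).1
  have hK6b := fun j h1 h2 => (hK6 j (Finset.mem_Icc.2 ⟨h1, h2⟩)).2
  obtain ⟨KK, hKKeq⟩ : ∃ KK : ℝ, KK = 2 * K6 * Mv + K6 := ⟨_, rfl⟩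
  have hKK0 : 0 ≤ KK := by rw [hKKeq]; positivity
  -- the oscillation function
  obtain ⟨Φ, hΦeq⟩ : ∃ Φ : ℝ → ℝ → ℝ,
      Φ = fun x y => max |(f x).1 - (f y).1| |(f x).2 - (f y).2| := ⟨_, rfl⟩
  have hΦ1 : ∀ x y, |(f x).1 - (f y).1| ≤ Φ x y := by
    intro x y; rw [hΦeq]; exact le_max_left _ _
  have hΦ2 : ∀ x y, |(f x).2 - (f y).2| ≤ Φ x y := by
    intro x y; rw [hΦeq]; exact le_max_right _ _
  have hΦnn : ∀ x y, 0 ≤ Φ x y := fun x y => (abs_nonneg _).trans (hΦ1 x y)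
  have hΦmax : ∀ x y (cc : ℝ), |(f x).1 - (f y).1| ≤ cc → |(f x).2 - (f y).2| ≤ cc →
      Φ x y ≤ cc := by
    intro x y cc h1 h2
    simp only [hΦeq]
    exact max_le h1 h2
  have hΦdiag : ∀ x, Φ x x ≤ 0 := fun x => hΦmax x x 0 (by simp) (by simp)
  have hΦsymm : ∀ x y, Φ x y = Φ y x := by
    intro x y
    simp only [hΦeq]
    rw [abs_sub_comm ((f x).1), abs_sub_comm ((f x).2)]
  have hΦtri : ∀ x y z, Φ x z ≤ Φ x y + Φ y z := by
    intro x y z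
    apply hΦmax
    · calc |(f x).1 - (f z).1| ≤ |(f x).1 - (f y).1| + |(f y).1 - (f z).1| :=
            abs_sub_le _ _ _
        _ ≤ Φ x y + Φ y z := add_le_add (hΦ1 x y) (hΦ1 y z)
    · calc |(f x).2 - (f z).2| ≤ |(f x).2 - (f y).2| + |(f y).2 - (f z).2| :=
            abs_sub_le _ _ _
        _ ≤ Φ x y + Φ y z := add_le_add (hΦ2 x y) (hΦ2 y z)
  obtain ⟨M0, hM0eq⟩ : ∃ M0 : ℝ, M0 = 2 * Mf := ⟨_, rfl⟩
  have hM00 : 0 ≤ M0 := by rw [hM0eq]; linarith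
  have hΦbound : ∀ x ∈ Set.Icc (t 0) (t N), ∀ y ∈ Set.Icc (t 0) (t N), Φ x y ≤ M0 := by
    intro x hx y hy
    rw [hM0eq]
    apply hΦmax
    · calc |(f x).1 - (f y).1| ≤ |(f x).1| + |(f y).1| := abs_sub _ _
        _ ≤ 2 * Mf := by linarith [hMf1 x hx, hMf1 y hy]
    · calc |(f x).2 - (f y).2| ≤ |(f x).2| + |(f y).2| := abs_sub _ _
        _ ≤ 2 * Mf := by linarith [hMf2 x hx, hMf2 y hy]
  -- five-term triangle inequality helper
  have habs5 : ∀ a1 a2 a3 a4 a5 : ℝ,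
      |a1 + a2 + a3 + a4 + a5| ≤ |a1| + |a2| + |a3| + |a4| + |a5| := by
    intro a1 a2 a3 a4 a5
    have h1 := abs_add_le (a1 + a2 + a3 + a4) a5
    have h2 := abs_add_le (a1 + a2 + a3) a4
    have h3 := abs_add_le (a1 + a2) a3
    have h4 := abs_add_le a1 a2
    linarith
  -- core contraction estimate
  have hcore : ∀ j, 1 ≤ j → j ≤ N → ∀ u ∈ Set.Icc (t 0) (t N), ∀ z ∈ Set.Icc (t 0) (t N),
      Φ (L j u) (L j z) ≤ γ * Φ u z + KK * |u - z| := by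
    intro j h1 h2 u hu z hz
    have hfu := hfe j h1 h2 u hu
    have hfz := hfe j h1 h2 z hz
    have hsb : |s j ((f u).1) - s j ((f z).1)| ≤ Φ u z :=
      (hs1 j h1 h2 _ _).trans (hΦ1 u z)
    have hrb : |r j ((f u).2) - r j ((f z).2)| ≤ Φ u z :=
      (hr1 j h1 h2 _ _).trans (hΦ2 u z)
    have hKb := hK6b j h1 h2 (b j) (by simp) u hu z hz
    have hKc := hK6b j h1 h2 (c j) (by simp) u hu z hz
    have hKd := hK6b j h1 h2 (d j) (by simp) u hu z hz
    have hKe := hK6b j h1 h2 (e j) (by simp) u hu z hz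
    have hKp := hK6b j h1 h2 (p j) (by simp) u hu z hz
    have hKq := hK6b j h1 h2 (q j) (by simp) u hu z hz
    have hsvz := hsv j h1 h2 z hz
    have hrvz := hrv j h1 h2 z hz
    have habsuz : (0:ℝ) ≤ |u - z| := abs_nonneg _
    have hd1 : |(f (L j u)).1 - (f (L j z)).1| ≤ γ * Φ u z + KK * |u - z| := by
      have e1 : (f (L j u)).1 - (f (L j z)).1 =
          b j u * (s j ((f u).1) - s j ((f z).1)) + (b j u - b j z) * s j ((f z).1) +
          c j u * (r j ((f u).2) - r j ((f z).2)) + (c j u - c j z) * r j ((f z).2) +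
          (p j u - p j z) := by
        rw [hfu, hfz, hF, hF]
        dsimp only
        ring
      rw [e1]
      have B1 : |b j u * (s j ((f u).1) - s j ((f z).1))| ≤ |b j u| * Φ u z := by
        rw [abs_mul]
        exact mul_le_mul_of_nonneg_left hsb (abs_nonneg _)
      have B2 : |(b j u - b j z) * s j ((f z).1)| ≤ (K6 * |u - z|) * Mv := by
        rw [abs_mul]
        exact mul_le_mul hKb hsvz (abs_nonneg _) (by positivity)
      have B3 : |c j u * (r j ((f u).2) - r j ((f z).2))| ≤ |c j u| * Φ u z := by
        rw [abs_mul]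
        exact mul_le_mul_of_nonneg_left hrb (abs_nonneg _)
      have B4 : |(c j u - c j z) * r j ((f z).2)| ≤ (K6 * |u - z|) * Mv := by
        rw [abs_mul]
        exact mul_le_mul hKc hrvz (abs_nonneg _) (by positivity)
      have hsum := habs5 (b j u * (s j ((f u).1) - s j ((f z).1)))
        ((b j u - b j z) * s j ((f z).1))
        (c j u * (r j ((f u).2) - r j ((f z).2)))
        ((c j u - c j z) * r j ((f z).2))
        (p j u - p j z)
      have hbc' : (|b j u| + |c j u|) * Φ u z ≤ γ * Φ u z :=
        mul_le_mul_of_nonneg_right (hγbc j h1 h2 u hu) (hΦnn u z)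
      rw [hKKeq]
      linarith [hsum, B1, B2, B3, B4, hKp, hbc']
    have hd2 : |(f (L j u)).2 - (f (L j z)).2| ≤ γ * Φ u z + KK * |u - z| := by
      have e1 : (f (L j u)).2 - (f (L j z)).2 =
          d j u * (s j ((f u).1) - s j ((f z).1)) + (d j u - d j z) * s j ((f z).1) +
          e j u * (r j ((f u).2) - r j ((f z).2)) + (e j u - e j z) * r j ((f z).2) +
          (q j u - q j z) := by
        rw [hfu, hfz, hF, hF]
        dsimp only
        ring
      rw [e1]
      have B1 : |d j u * (s j ((f u).1) - s j ((f z).1))| ≤ |d j u| * Φ u z := by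
        rw [abs_mul]
        exact mul_le_mul_of_nonneg_left hsb (abs_nonneg _)
      have B2 : |(d j u - d j z) * s j ((f z).1)| ≤ (K6 * |u - z|) * Mv := by
        rw [abs_mul]
        exact mul_le_mul hKd hsvz (abs_nonneg _) (by positivity)
      have B3 : |e j u * (r j ((f u).2) - r j ((f z).2))| ≤ |e j u| * Φ u z := by
        rw [abs_mul]
        exact mul_le_mul_of_nonneg_left hrb (abs_nonneg _)
      have B4 : |(e j u - e j z) * r j ((f z).2)| ≤ (K6 * |u - z|) * Mv := by
        rw [abs_mul]
        exact mul_le_mul hKe hrvz (abs_nonneg _) (by positivity)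
      have hsum := habs5 (d j u * (s j ((f u).1) - s j ((f z).1)))
        ((d j u - d j z) * s j ((f z).1))
        (e j u * (r j ((f u).2) - r j ((f z).2)))
        ((e j u - e j z) * r j ((f z).2))
        (q j u - q j z)
      have hde' : (|d j u| + |e j u|) * Φ u z ≤ γ * Φ u z :=
        mul_le_mul_of_nonneg_right (hγde j h1 h2 u hu) (hΦnn u z)
      rw [hKKeq]
      linarith [hsum, B1, B2, B3, B4, hKq, hde']
    exact hΦmax (L j u) (L j z) _ hd1 hd2
  -- pull back points
  have hLdist : ∀ j, 1 ≤ j → j ≤ N → ∀ u z : ℝ, L j u - L j z = a j * (u - z) := by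
    intro j h1 h2 u z
    rw [hL j h1 h2, hL j h1 h2]
    ring
  have hpull : ∀ j, 1 ≤ j → j ≤ N → ∀ z, t (j - 1) ≤ z → z ≤ t j →
      ∃ u, u ∈ Set.Icc (t 0) (t N) ∧ L j u = z := by
    intro j h1 h2 z hz1 hz2
    refine ⟨(z - fc j) / a j, ?_, ?_⟩
    · constructor
      · have e1 : L j (t 0) = t (j - 1) := hL0 j h1 h2
        rw [hL j h1 h2] at e1
        have h3 : a j * t 0 + fc j ≤ z := by rw [e1]; exact hz1
        rw [le_div_iff₀ (hapos j h1 h2)]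
        linarith
      · have e1 : L j (t N) = t j := hLN j h1 h2
        rw [hL j h1 h2] at e1
        have h3 : z ≤ a j * t N + fc j := by rw [e1]; exact hz2
        rw [div_le_iff₀ (hapos j h1 h2)]
        linarith
    · rw [hL j h1 h2]
      have hne : a j ≠ 0 := (hapos j h1 h2).ne'
      field_simp
      ring
  have hback : ∀ j, 1 ≤ j → j ≤ N → ∀ u z cc : ℝ, 0 ≤ cc →
      |L j u - L j z| ≤ am * cc → |u - z| ≤ cc := by
    intro j h1 h2 u z cc hcc hle
    have h3 := hLdist j h1 h2 u z
    have h4 : |L j u - L j z| = a j * |u - z| := by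
      rw [h3, abs_mul, abs_of_pos (hapos j h1 h2)]
    have h5 : am * cc ≤ a j * cc := mul_le_mul_of_nonneg_right (hammin j h1 h2) hcc
    rw [h4] at hle
    have h6 : a j * |u - z| ≤ a j * cc := by linarith
    exact le_of_mul_le_mul_left h6 (hapos j h1 h2)
  -- arithmetic recursion step
  obtain ⟨EE, hEEeq⟩ : ∃ EE : ℝ, EE = KK * Δ / ρ := ⟨_, rfl⟩
  have hEE0 : 0 ≤ EE := by
    rw [hEEeq]
    positivity
  have hAAnn : ∀ n : ℕ, 0 ≤ (M0 + EE * n) * ρ ^ n := fun n =>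
    mul_nonneg (add_nonneg hM00 (mul_nonneg hEE0 (Nat.cast_nonneg n))) (pow_nonneg hρ0.le n)
  have harith : ∀ (cf : ℝ), 1 ≤ cf → ∀ (n : ℕ) (X : ℝ),
      X ≤ cf * ((M0 + EE * n) * ρ ^ n) →
      γ * X + KK * (am ^ n * Δ) ≤ cf * ((M0 + EE * (n + 1 : ℕ)) * ρ ^ (n + 1)) := by
    intro cf hcf n X hX
    have h1 : γ * X ≤ γ * (cf * ((M0 + EE * n) * ρ ^ n)) := mul_le_mul_of_nonneg_left hX hγ0
    have h2 : γ * (cf * ((M0 + EE * n) * ρ ^ n)) ≤ ρ * (cf * ((M0 + EE * n) * ρ ^ n)) :=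
      mul_le_mul_of_nonneg_right hγρ (mul_nonneg (by linarith) (hAAnn n))
    have h4 : am ^ n ≤ ρ ^ n := pow_le_pow_left₀ ham0.le hamρ n
    have h5 : KK * (am ^ n * Δ) ≤ KK * (ρ ^ n * Δ) :=
      mul_le_mul_of_nonneg_left (mul_le_mul_of_nonneg_right h4 hΔ0.le) hKK0
    have h6 : KK * (ρ ^ n * Δ) = EE * ρ ^ (n + 1) := by
      rw [hEEeq, pow_succ]
      field_simp
    have h7 : EE * ρ ^ (n + 1) ≤ cf * (EE * ρ ^ (n + 1)) :=
      le_mul_of_one_le_left (mul_nonneg hEE0 (pow_nonneg hρ0.le _)) hcf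
    have h8 : ρ * (cf * ((M0 + EE * n) * ρ ^ n)) + cf * (EE * ρ ^ (n + 1)) =
        cf * ((M0 + EE * ((n : ℝ) + 1)) * ρ ^ (n + 1)) := by
      rw [pow_succ]
      ring
    have h9 : ((n + 1 : ℕ) : ℝ) = (n : ℝ) + 1 := by push_cast; ring
    rw [h9]
    linarith
  -- right endpoint lemma
  have hRend : ∀ n : ℕ, ∀ x ∈ Set.Icc (t 0) (t N), |x - t N| ≤ am ^ n * Δ →
      Φ x (t N) ≤ (M0 + EE * n) * ρ ^ n := by
    intro n
    induction n with
    | zero =>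
      intro x hx _
      have := hΦbound x hx (t N) (htmem N le_rfl)
      simpa using this
    | succ n ih =>
      intro x hx hd
      have hxN : x ≤ t N := hx.2
      have habs : |x - t N| = t N - x := by
        rw [abs_sub_comm]
        exact abs_of_nonneg (by linarith)
      have hampow : am ^ (n + 1) * Δ ≤ Δ := by
        have h1 : am ^ (n + 1) ≤ 1 := pow_le_one₀ ham0.le ham1.le
        nlinarith
      have hΔN : Δ ≤ t N - t (N - 1) := hΔmin N hN le_rfl
      have hxlow : t (N - 1) ≤ x := by
        rw [habs] at hd
        linarith
      obtain ⟨u, huI, hLu⟩ := hpull N hN le_rfl x hxlow hxN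
      have htN : L N (t N) = t N := hLN N hN le_rfl
      have hud : |u - t N| ≤ am ^ n * Δ := by
        apply hback N hN le_rfl u (t N) (am ^ n * Δ)
          (mul_nonneg (pow_nonneg ham0.le n) hΔ0.le)
        rw [hLu, htN]
        calc |x - t N| ≤ am ^ (n + 1) * Δ := hd
          _ = am * (am ^ n * Δ) := by rw [pow_succ]; ring
      have hIH := ih u huI hud
      have hc := hcore N hN le_rfl u huI (t N) (htmem N le_rfl)
      rw [hLu, htN] at hc
      calc Φ x (t N) ≤ γ * Φ u (t N) + KK * |u - t N| := hc
        _ ≤ γ * Φ u (t N) + KK * (am ^ n * Δ) := by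
            have := mul_le_mul_of_nonneg_left hud hKK0
            linarith
        _ ≤ 1 * ((M0 + EE * (n + 1 : ℕ)) * ρ ^ (n + 1)) := by
            have := harith 1 le_rfl n (Φ u (t N)) (by rw [one_mul]; exact hIH)
            linarith
        _ = (M0 + EE * (n + 1 : ℕ)) * ρ ^ (n + 1) := one_mul _
  -- left endpoint lemma
  have hLend : ∀ n : ℕ, ∀ x ∈ Set.Icc (t 0) (t N), |x - t 0| ≤ am ^ n * Δ →
      Φ x (t 0) ≤ (M0 + EE * n) * ρ ^ n := by
    intro n
    induction n with
    | zero =>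
      intro x hx _
      have := hΦbound x hx (t 0) (htmem 0 (Nat.zero_le _))
      simpa using this
    | succ n ih =>
      intro x hx hd
      have hx0 : t 0 ≤ x := hx.1
      have habs : |x - t 0| = x - t 0 := abs_of_nonneg (by linarith)
      have hampow : am ^ (n + 1) * Δ ≤ Δ := by
        have h1 : am ^ (n + 1) ≤ 1 := pow_le_one₀ ham0.le ham1.le
        nlinarith
      have hΔ1 : Δ ≤ t 1 - t 0 := by
        have := hΔmin 1 le_rfl hN
        simpa using this
      have hxhigh : x ≤ t 1 := by
        rw [habs] at hd
        linarith
      have ht10 : t (1 - 1) = t 0 := by norm_num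
      obtain ⟨u, huI, hLu⟩ := hpull 1 le_rfl hN x (ht10 ▸ hx0) hxhigh
      have ht0 : L 1 (t 0) = t 0 := by
        have := hL0 1 le_rfl hN
        rwa [ht10] at this
      have hud : |u - t 0| ≤ am ^ n * Δ := by
        apply hback 1 le_rfl hN u (t 0) (am ^ n * Δ)
          (mul_nonneg (pow_nonneg ham0.le n) hΔ0.le)
        rw [hLu, ht0]
        calc |x - t 0| ≤ am ^ (n + 1) * Δ := hd
          _ = am * (am ^ n * Δ) := by rw [pow_succ]; ring
      have hIH := ih u huI hud
      have hc := hcore 1 le_rfl hN u huI (t 0) (htmem 0 (Nat.zero_le _))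
      rw [hLu, ht0] at hc
      calc Φ x (t 0) ≤ γ * Φ u (t 0) + KK * |u - t 0| := hc
        _ ≤ γ * Φ u (t 0) + KK * (am ^ n * Δ) := by
            have := mul_le_mul_of_nonneg_left hud hKK0
            linarith
        _ ≤ 1 * ((M0 + EE * (n + 1 : ℕ)) * ρ ^ (n + 1)) := by
            have := harith 1 le_rfl n (Φ u (t 0)) (by rw [one_mul]; exact hIH)
            linarith
        _ = (M0 + EE * (n + 1 : ℕ)) * ρ ^ (n + 1) := one_mul _
  -- localization
  have hloc : ∀ x ∈ Set.Icc (t 0) (t N), ∃ m, 1 ≤ m ∧ m ≤ N ∧ t (m - 1) ≤ x ∧ x ≤ t m := by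
    intro x hx
    have key : ∀ k : ℕ, 1 ≤ k → k ≤ N → x ≤ t k →
        ∃ m, 1 ≤ m ∧ m ≤ k ∧ t (m - 1) ≤ x ∧ x ≤ t m := by
      intro k
      induction k with
      | zero => omega
      | succ k ih =>
        intro _ hkN hxk
        rcases Nat.eq_zero_or_pos k with rfl | hk1
        · refine ⟨1, le_rfl, le_rfl, ?_, hxk⟩
          simpa using hx.1
        · rcases le_or_gt x (t k) with hle | hgt
          · obtain ⟨m, hm1, hm2, hm3, hm4⟩ := ih hk1 (by omega) hle
            exact ⟨m, hm1, by omega, hm3, hm4⟩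
          · refine ⟨k + 1, by omega, le_rfl, ?_, hxk⟩
            have : k + 1 - 1 = k := by omega
            rw [this]
            exact hgt.le
    exact (key N hN le_rfl hx.2).imp (fun m ⟨h1, h2, h3⟩ => ⟨h1, h2, h3⟩)
  -- general two-point lemma
  have hgen : ∀ n : ℕ, ∀ x ∈ Set.Icc (t 0) (t N), ∀ y ∈ Set.Icc (t 0) (t N),
      |x - y| ≤ am ^ n * Δ → Φ x y ≤ 2 * ((M0 + EE * n) * ρ ^ n) := by
    intro n
    induction n with
    | zero =>
      intro x hx y hy _
      have := hΦbound x hx y hy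
      simp only [Nat.cast_zero, mul_zero, add_zero, pow_zero, mul_one]
      linarith
    | succ n ih =>
      have main : ∀ x ∈ Set.Icc (t 0) (t N), ∀ y ∈ Set.Icc (t 0) (t N), x ≤ y →
          |x - y| ≤ am ^ (n + 1) * Δ →
          Φ x y ≤ 2 * ((M0 + EE * (n + 1 : ℕ)) * ρ ^ (n + 1)) := by
        intro x hx y hy hxy hd
        have habsxy : |x - y| = y - x := by
          rw [abs_sub_comm]
          exact abs_of_nonneg (by linarith)
        have hampow : am ^ (n + 1) * Δ ≤ Δ := by
          have h1 : am ^ (n + 1) ≤ 1 := pow_le_one₀ ham0.le ham1.le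
          nlinarith
        obtain ⟨m, hm1, hmN, hmx1, hmx2⟩ := hloc x hx
        rcases le_or_gt y (t m) with hcase | hcase
        · -- same subinterval
          obtain ⟨u, huI, hLu⟩ := hpull m hm1 hmN x hmx1 hmx2
          obtain ⟨z, hzI, hLz⟩ := hpull m hm1 hmN y (le_trans hmx1 hxy) hcase
          have huz : |u - z| ≤ am ^ n * Δ := by
            apply hback m hm1 hmN u z (am ^ n * Δ)
              (mul_nonneg (pow_nonneg ham0.le n) hΔ0.le)
            rw [hLu, hLz]
            calc |x - y| ≤ am ^ (n + 1) * Δ := hd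
              _ = am * (am ^ n * Δ) := by rw [pow_succ]; ring
          have hIH := ih u huI z hzI huz
          have hc := hcore m hm1 hmN u huI z hzI
          rw [hLu, hLz] at hc
          calc Φ x y ≤ γ * Φ u z + KK * |u - z| := hc
            _ ≤ γ * Φ u z + KK * (am ^ n * Δ) := by
                have := mul_le_mul_of_nonneg_left huz hKK0
                linarith
            _ ≤ 2 * ((M0 + EE * (n + 1 : ℕ)) * ρ ^ (n + 1)) :=
                harith 2 (by norm_num) n (Φ u z) hIH
        · -- crossing the knot t m
          have hmltN : m < N := by
            rcases Nat.lt_or_ge m N with h | h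
            · exact h
            · exfalso
              have : m = N := by omega
              rw [this] at hcase
              exact absurd hy.2 (not_le.2 hcase)
          have hm1N : 1 ≤ m + 1 := by omega
          have hm2N : m + 1 ≤ N := by omega
          have htm1 : t ((m + 1) - 1) = t m := by norm_num
          -- piece 1 : Φ x (t m)
          have hxm : |x - t m| ≤ am ^ (n + 1) * Δ := by
            rw [abs_sub_comm, abs_of_nonneg (by linarith : (0:ℝ) ≤ t m - x)]
            rw [habsxy] at hd
            linarith
          have hp1 : Φ x (t m) ≤ (M0 + EE * (n + 1 : ℕ)) * ρ ^ (n + 1) := by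
            obtain ⟨u, huI, hLu⟩ := hpull m hm1 hmN x hmx1 hmx2
            have htmN : L m (t N) = t m := hLN m hm1 hmN
            have hud : |u - t N| ≤ am ^ n * Δ := by
              apply hback m hm1 hmN u (t N) (am ^ n * Δ)
                (mul_nonneg (pow_nonneg ham0.le n) hΔ0.le)
              rw [hLu, htmN]
              calc |x - t m| ≤ am ^ (n + 1) * Δ := hxm
                _ = am * (am ^ n * Δ) := by rw [pow_succ]; ring
            have hIH := hRend n u huI hud
            have hc := hcore m hm1 hmN u huI (t N) (htmem N le_rfl)
            rw [hLu, htmN] at hc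
            calc Φ x (t m) ≤ γ * Φ u (t N) + KK * |u - t N| := hc
              _ ≤ γ * Φ u (t N) + KK * (am ^ n * Δ) := by
                  have := mul_le_mul_of_nonneg_left hud hKK0
                  linarith
              _ ≤ 1 * ((M0 + EE * (n + 1 : ℕ)) * ρ ^ (n + 1)) :=
                  harith 1 le_rfl n (Φ u (t N)) (by rw [one_mul]; exact hIH)
              _ = _ := one_mul _
          -- piece 2 : Φ (t m) y
          have hym : |y - t m| ≤ am ^ (n + 1) * Δ := by
            rw [abs_of_nonneg (by linarith : (0:ℝ) ≤ y - t m)]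
            rw [habsxy] at hd
            linarith
          have hΔm1 : Δ ≤ t (m + 1) - t m := by
            have := hΔmin (m + 1) hm1N hm2N
            rwa [htm1] at this
          have hyub : y ≤ t (m + 1) := by
            rw [abs_of_nonneg (by linarith : (0:ℝ) ≤ y - t m)] at hym
            linarith
          have hp2 : Φ (t m) y ≤ (M0 + EE * (n + 1 : ℕ)) * ρ ^ (n + 1) := by
            obtain ⟨z, hzI, hLz⟩ := hpull (m + 1) hm1N hm2N y (htm1 ▸ hcase.le) hyub
            have ht0m : L (m + 1) (t 0) = t m := by
              have := hL0 (m + 1) hm1N hm2N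
              rwa [htm1] at this
            have hzd : |z - t 0| ≤ am ^ n * Δ := by
              apply hback (m + 1) hm1N hm2N z (t 0) (am ^ n * Δ)
                (mul_nonneg (pow_nonneg ham0.le n) hΔ0.le)
              rw [hLz, ht0m]
              calc |y - t m| ≤ am ^ (n + 1) * Δ := hym
                _ = am * (am ^ n * Δ) := by rw [pow_succ]; ring
            have hIH := hLend n z hzI hzd
            have hc := hcore (m + 1) hm1N hm2N (t 0) (htmem 0 (Nat.zero_le _)) z hzI
            rw [hLz, ht0m] at hc
            have hsw : Φ (t m) y ≤ γ * Φ z (t 0) + KK * |z - t 0| := by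
              rw [hΦsymm (t m) y]
              calc Φ y (t m) ≤ γ * Φ (t 0) z + KK * |t 0 - z| := by
                    rw [hΦsymm y (t m)] at *
                    exact hΦsymm (t m) y ▸ hc
                _ = γ * Φ z (t 0) + KK * |z - t 0| := by
                    rw [hΦsymm (t 0) z, abs_sub_comm]
            calc Φ (t m) y ≤ γ * Φ z (t 0) + KK * |z - t 0| := hsw
              _ ≤ γ * Φ z (t 0) + KK * (am ^ n * Δ) := by
                  have := mul_le_mul_of_nonneg_left hzd hKK0
                  linarith
              _ ≤ 1 * ((M0 + EE * (n + 1 : ℕ)) * ρ ^ (n + 1)) :=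
                  harith 1 le_rfl n (Φ z (t 0)) (by rw [one_mul]; exact hIH)
              _ = _ := one_mul _
          calc Φ x y ≤ Φ x (t m) + Φ (t m) y := hΦtri x (t m) y
            _ ≤ 2 * ((M0 + EE * (n + 1 : ℕ)) * ρ ^ (n + 1)) := by linarith
      intro x hx y hy hd
      rcases le_total x y with h | h
      · exact main x hx y hy h hd
      · rw [hΦsymm]
        rw [abs_sub_comm] at hd
        exact main y hy x hx h hd
  -- apply the abstract Hölder lemma
  obtain ⟨MM, hMMeq⟩ : ∃ MM : ℝ, MM = 2 * M0 + 2 * EE := ⟨_, rfl⟩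
  have hMM0 : 0 ≤ MM := by rw [hMMeq]; linarith
  have hMbound : ∀ x ∈ Set.Icc (t 0) (t N), ∀ y ∈ Set.Icc (t 0) (t N), Φ x y ≤ MM := by
    intro x hx y hy
    have := hΦbound x hx y hy
    rw [hMMeq]
    linarith
  have hMscale : ∀ n : ℕ, ∀ x ∈ Set.Icc (t 0) (t N), ∀ y ∈ Set.Icc (t 0) (t N),
      |x - y| ≤ am ^ n * Δ → Φ x y ≤ MM * (1 + n) * ρ ^ n := by
    intro n x hx y hy hd
    have h1 := hgen n x hx y hy hd
    have h2 : 2 * (M0 + EE * n) ≤ MM * (1 + n) := by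
      rw [hMMeq]
      have hn0 : (0:ℝ) ≤ n := Nat.cast_nonneg n
      nlinarith
    have h3 : 2 * ((M0 + EE * n) * ρ ^ n) ≤ MM * (1 + n) * ρ ^ n := by
      have hρn : (0:ℝ) ≤ ρ ^ n := pow_nonneg hρ0.le n
      calc 2 * ((M0 + EE * n) * ρ ^ n) = (2 * (M0 + EE * n)) * ρ ^ n := by ring
        _ ≤ MM * (1 + n) * ρ ^ n := mul_le_mul_of_nonneg_right h2 hρn
    linarith
  obtain ⟨α, hα0, hα1, C, hC0, hHol⟩ :=
    holder_of_scales Φ (t 0) (t N) Δ am ρ MM hTT hΔ0 ham0 ham1 hρ0 hρ1 hamρ hMM0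
      hΦdiag hMbound hMscale
  have hHol1 : ∀ x ∈ Set.Icc (t 0) (t N), ∀ y ∈ Set.Icc (t 0) (t N),
      |(f x).1 - (f y).1| ≤ C * |x - y| ^ α :=
    fun x hx y hy => (hΦ1 x y).trans (hHol x hx y hy)
  refine ⟨α, hα0, hα1, ⟨C, hC0, hHol1⟩, ?_⟩
  exact limsup_le_of_holder (fun x => (f x).1) (t 0) (t N) hTT C α hC0 hα0 hα1 hHol1
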